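/- For k dividing m·n, the number of subgroups of order k of Z_m × Z_n equals the sum of φ(ij/k) over all pairs (i, j) with i ∣ gcd(m,k), j ∣ gcd(n,k), and k ∣ ij. -/

import Mathlib

open Function AddSubgroup

namespace NOSK







variable {m : ℕ}

noncomputable def gen (m i : ℕ) (h : i ∣ m) : ZMod i →+ ZMod m :=
  ZMod.lift i ⟨zmultiplesHom (ZMod m) ((m / i : ℕ) : ZMod m), by
    simp only [zmultiplesHom_apply, natCast_zsmul, ← Nat.cast_smul_eq_nsmul (ZMod m), smul_eq_mul,
      ← Nat.cast_mul, Nat.mul_div_cancel' h, ZMod.natCast_self]⟩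

lemma gen_intCast (m i : ℕ) (h : i ∣ m) (s : ℤ) :
    gen m i h (s : ZMod i) = s • ((m / i : ℕ) : ZMod m) := by
  simp [gen]

lemma addOrderOf_gen_one (hm : m ≠ 0) (i : ℕ) (h : i ∣ m) :
    addOrderOf ((m / i : ℕ) : ZMod m) = i := by
  rw [ZMod.addOrderOf_coe _ hm, Nat.gcd_eq_right (Nat.div_dvd_of_dvd h),
    Nat.div_div_self h hm]

lemma gen_injective (hm : m ≠ 0) (i : ℕ) (h : i ∣ m) :
    Injective (gen m i h) := by
  rw [gen, ZMod.lift_injective]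
  intro s hs
  simp only [zmultiplesHom_apply] at hs
  rw [← addOrderOf_dvd_iff_zsmul_eq_zero, addOrderOf_gen_one hm i h] at hs
  rwa [ZMod.intCast_zmod_eq_zero_iff_dvd]

lemma range_gen (hm : m ≠ 0) (i : ℕ) (h : i ∣ m) :
    (gen m i h).range = AddSubgroup.zmultiples ((m / i : ℕ) : ZMod m) := by
  ext x
  simp only [AddMonoidHom.mem_range, AddSubgroup.mem_zmultiples_iff]
  constructor
  · rintro ⟨s, rfl⟩
    obtain ⟨t, rfl⟩ := ZMod.intCast_surjective s
    exact ⟨t, (gen_intCast m i h t).symm⟩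
  · rintro ⟨t, rfl⟩
    exact ⟨(t : ZMod i), gen_intCast m i h t⟩

lemma card_range_gen (hm : m ≠ 0) (i : ℕ) (h : i ∣ m) :
    Nat.card (gen m i h).range = i := by
  rw [range_gen hm i h, Nat.card_zmultiples, addOrderOf_gen_one hm i h]

/-- every subgroup of `ZMod m` is determined by its cardinality -/
lemma eq_range_gen (hm : m ≠ 0) (S : AddSubgroup (ZMod m)) (i : ℕ) (h : i ∣ m)
    (hS : Nat.card S = i) : S = (gen m i h).range := by
  haveI : NeZero m := ⟨hm⟩
  have hi : i ≠ 0 := fun h0 => hm (by simpa [h0] using h)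
  -- the kernel of multiplication by `i`
  set T : AddSubgroup (ZMod m) := (AddMonoidHom.mulLeft (i : ZMod m)).ker with hT
  have hmem : ∀ x : ZMod m, x ∈ T ↔ (i : ZMod m) * x = 0 := fun x => Iff.rfl
  -- range gen ≤ T
  have h1 : (gen m i h).range ≤ T := by
    rintro x ⟨s, rfl⟩
    obtain ⟨t, rfl⟩ := ZMod.intCast_surjective s
    have h0 : i • ((m / i : ℕ) : ZMod m) = 0 := by
      rw [← addOrderOf_dvd_iff_nsmul_eq_zero, addOrderOf_gen_one hm i h]
    rw [hmem, gen_intCast, ← nsmul_eq_mul, smul_comm, h0, smul_zero]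
  -- S ≤ T
  have h2 : S ≤ T := by
    intro x hx
    rw [hmem, ← nsmul_eq_mul]
    have := card_nsmul_eq_zero' (x := (⟨x, hx⟩ : S))
    rw [hS] at this
    simpa using congrArg (Subtype.val) this
  -- card T = i
  have hcardT : Nat.card T = i := by
    have hrange : (AddMonoidHom.mulLeft (i : ZMod m)).range
        = AddSubgroup.zmultiples ((i : ℕ) : ZMod m) := by
      ext x
      simp only [AddMonoidHom.mem_range, AddSubgroup.mem_zmultiples_iff]
      constructor
      · rintro ⟨y, rfl⟩
        obtain ⟨t, rfl⟩ := ZMod.intCast_surjective y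
        exact ⟨t, by simp [AddMonoidHom.mulLeft, zsmul_eq_mul, mul_comm]⟩
      · rintro ⟨t, rfl⟩
        exact ⟨(t : ZMod m), by simp [AddMonoidHom.mulLeft, zsmul_eq_mul, mul_comm]⟩
    have hT' : Nat.card (ZMod m) =
        Nat.card (ZMod m ⧸ T) * Nat.card T :=
      AddSubgroup.card_eq_card_quotient_mul_card_addSubgroup T
    have hq : Nat.card (ZMod m ⧸ T) = Nat.card (AddMonoidHom.mulLeft (i : ZMod m)).range :=
      Nat.card_congr (QuotientAddGroup.quotientKerEquivRange _).toEquiv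
    have hro : Nat.card (AddMonoidHom.mulLeft (i : ZMod m)).range = m / i := by
      rw [hrange, Nat.card_zmultiples, ZMod.addOrderOf_coe _ hm, Nat.gcd_eq_right h]
    rw [hq, hro, Nat.card_zmod] at hT'
    have hmi : 0 < m / i := Nat.div_pos (Nat.le_of_dvd (Nat.pos_of_ne_zero hm) h)
      (Nat.pos_of_ne_zero hi)
    refine Nat.eq_of_mul_eq_mul_left hmi ?_
    rw [← hT', Nat.div_mul_cancel h]
  have e1 : S = T := AddSubgroup.eq_of_le_of_card_ge h2 (by rw [hS, hcardT])
  have e2 : (gen m i h).range = T := AddSubgroup.eq_of_le_of_card_ge h1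
    (by rw [hcardT, card_range_gen hm i h])
  rw [e1, e2]




lemma aux_div_dvd {i j k : ℕ} (hk0 : k ≠ 0) (hjk : j ∣ k) (hkij : k ∣ i * j) :
    i * j / k ∣ i := by
  obtain ⟨c, rfl⟩ := hjk
  obtain ⟨e, he⟩ := hkij
  have hj0 : j ≠ 0 := fun h => hk0 (by simp [h])
  have hie : i = c * e := by
    refine Nat.eq_of_mul_eq_mul_left (Nat.pos_of_ne_zero hj0) ?_
    rw [mul_comm j i, he]; ring
  have hd : i * j / (j * c) = e := by
    rw [he, Nat.mul_div_cancel_left _ (Nat.pos_of_ne_zero hk0)]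
  rw [hd, hie]
  exact Dvd.intro_left c rfl

lemma aux_div_dvd' {i j k : ℕ} (hk0 : k ≠ 0) (hik : i ∣ k) (hkij : k ∣ i * j) :
    i * j / k ∣ j := by
  rw [mul_comm] at hkij ⊢
  exact aux_div_dvd hk0 hik hkij

/-- The hom cutting out the graph-type subgroup. -/
noncomputable def gmap (i j k : ℕ) (hdi : i * j / k ∣ i) (hdj : i * j / k ∣ j)
    (u : ZMod (i * j / k)) : ZMod i × ZMod j →+ ZMod (i * j / k) :=
  (ZMod.castHom hdj (ZMod (i * j / k))).toAddMonoidHom.comp (AddMonoidHom.snd _ _)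
    - (AddMonoidHom.mulLeft u).comp
        ((ZMod.castHom hdi (ZMod (i * j / k))).toAddMonoidHom.comp (AddMonoidHom.fst _ _))

lemma gmap_apply (i j k : ℕ) (hdi : i * j / k ∣ i) (hdj : i * j / k ∣ j)
    (u : ZMod (i * j / k)) (s : ZMod i) (t : ZMod j) :
    gmap i j k hdi hdj u (s, t)
      = ZMod.castHom hdj (ZMod (i * j / k)) t - u * ZMod.castHom hdi (ZMod (i * j / k)) s := by
  rfl

lemma gmap_surjective (i j k : ℕ) (hdi : i * j / k ∣ i) (hdj : i * j / k ∣ j)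
    (u : ZMod (i * j / k)) : Surjective (gmap i j k hdi hdj u) := by
  intro z
  obtain ⟨t, ht⟩ := ZMod.ringHom_surjective (ZMod.castHom hdj (ZMod (i * j / k))) z
  exact ⟨(0, t), by simp [gmap_apply, ht]⟩

lemma card_ker_gmap {i j k : ℕ} (hi0 : i ≠ 0) (hj0 : j ≠ 0) (hk0 : k ≠ 0)
    (hkij : k ∣ i * j) (hdi : i * j / k ∣ i) (hdj : i * j / k ∣ j)
    (u : ZMod (i * j / k)) : Nat.card (gmap i j k hdi hdj u).ker = k := by
  have hij0 : i * j ≠ 0 := by positivity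
  have hd0 : i * j / k ≠ 0 :=
    Nat.div_ne_zero_iff.2 ⟨hk0, Nat.le_of_dvd (Nat.pos_of_ne_zero hij0) hkij⟩
  have h1 : Nat.card (ZMod i × ZMod j) =
      Nat.card ((ZMod i × ZMod j) ⧸ (gmap i j k hdi hdj u).ker)
        * Nat.card (gmap i j k hdi hdj u).ker :=
    AddSubgroup.card_eq_card_quotient_mul_card_addSubgroup _
  have h2 : Nat.card ((ZMod i × ZMod j) ⧸ (gmap i j k hdi hdj u).ker) = i * j / k := by
    rw [Nat.card_congr (QuotientAddGroup.quotientKerEquivRange _).toEquiv,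
      AddMonoidHom.range_eq_top_of_surjective _ (gmap_surjective i j k hdi hdj u),
      AddSubgroup.card_top, Nat.card_zmod]
  rw [Nat.card_prod, Nat.card_zmod, Nat.card_zmod, h2] at h1
  refine Nat.eq_of_mul_eq_mul_left (Nat.pos_of_ne_zero hd0) ?_
  rw [← h1, Nat.div_mul_cancel hkij]

section Hsub

variable (m n k i j : ℕ) (him : i ∣ m) (hjn : j ∣ n)
  (hdi : i * j / k ∣ i) (hdj : i * j / k ∣ j)

/-- The subgroup of `ZMod m × ZMod n` attached to `(i, j, u)`. -/
noncomputable def Hsub (u : ZMod (i * j / k)) : AddSubgroup (ZMod m × ZMod n) :=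
  ((gmap i j k hdi hdj u).ker).map ((gen m i him).prodMap (gen n j hjn))

lemma mem_Hsub (u : ZMod (i * j / k)) (x : ZMod m) (y : ZMod n) :
    (x, y) ∈ Hsub m n k i j him hjn hdi hdj u ↔
      ∃ s t, x = gen m i him s ∧ y = gen n j hjn t ∧
        ZMod.castHom hdj (ZMod (i * j / k)) t = u * ZMod.castHom hdi (ZMod (i * j / k)) s := by
  constructor
  · rintro ⟨⟨s, t⟩, hst, h⟩
    rw [SetLike.mem_coe, AddMonoidHom.mem_ker, gmap_apply, sub_eq_zero] at hst
    obtain ⟨h1, h2⟩ := Prod.mk.injEq .. ▸ h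
    exact ⟨s, t, h1.symm, h2.symm, hst⟩
  · rintro ⟨s, t, rfl, rfl, h⟩
    refine ⟨(s, t), ?_, rfl⟩
    rw [SetLike.mem_coe, AddMonoidHom.mem_ker, gmap_apply, h, sub_self]

lemma card_Hsub (hm : m ≠ 0) (hn : n ≠ 0) (hk0 : k ≠ 0) (hkij : k ∣ i * j)
    (u : ZMod (i * j / k)) :
    Nat.card (Hsub m n k i j him hjn hdi hdj u) = k := by
  have hi0 : i ≠ 0 := fun h0 => hm (by simpa [h0] using him)
  have hj0 : j ≠ 0 := fun h0 => hn (by simpa [h0] using hjn)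
  have hinj : Injective ((gen m i him).prodMap (gen n j hjn)) := by
    rw [AddMonoidHom.coe_prodMap]
    exact Prod.map_injective.2 ⟨gen_injective hm i him, gen_injective hn j hjn⟩
  rw [Hsub]
  rw [Nat.card_congr (AddSubgroup.equivMapOfInjective _ _ hinj).symm.toEquiv]
  exact card_ker_gmap hi0 hj0 hk0 hkij hdi hdj u

end Hsub


lemma card_ker_of_surjective {A B : Type*} [AddGroup A] [AddGroup B]
    (f : A →+ B) (hf : Surjective f) :
    Nat.card A = Nat.card B * Nat.card f.ker := by
  rw [AddSubgroup.card_eq_card_quotient_mul_card_addSubgroup f.ker]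
  congr 1
  rw [Nat.card_congr (QuotientAddGroup.quotientKerEquivRange _).toEquiv,
    AddMonoidHom.range_eq_top_of_surjective _ hf, AddSubgroup.card_top]

/-- Subgroups of `ZMod m` of the same cardinality are equal (uniqueness transfer). -/
lemma eq_map_ker_cast (hm : m ≠ 0) {i d : ℕ} (him : i ∣ m) (hdi : d ∣ i)
    (S : AddSubgroup (ZMod m)) (hS : Nat.card S * d = i) :
    S = ((ZMod.castHom hdi (ZMod d)).toAddMonoidHom.ker).map (gen m i him) := by
  have hi0 : i ≠ 0 := fun h0 => hm (by simpa [h0] using him)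
  have hd0 : d ≠ 0 := fun h0 => hi0 (by simpa [h0] using hdi)
  set C := ((ZMod.castHom hdi (ZMod d)).toAddMonoidHom.ker).map (gen m i him) with hC
  have hcardk : d * Nat.card (ZMod.castHom hdi (ZMod d)).toAddMonoidHom.ker = i := by
    have h2 := card_ker_of_surjective (ZMod.castHom hdi (ZMod d)).toAddMonoidHom
      (ZMod.ringHom_surjective _)
    rw [Nat.card_zmod, Nat.card_zmod] at h2
    exact h2.symm
  have hcardC : Nat.card C = Nat.card S := by
    rw [hC, Nat.card_congr (AddSubgroup.equivMapOfInjective _ _ (gen_injective hm i him)).symm.toEquiv]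
    have : d * Nat.card (ZMod.castHom hdi (ZMod d)).toAddMonoidHom.ker = d * Nat.card S := by
      rw [hcardk, ← hS, mul_comm]
    exact Nat.eq_of_mul_eq_mul_left (Nat.pos_of_ne_zero hd0) this
  have hq : Nat.card S ∣ m := dvd_trans (Dvd.intro d hS) him
  rw [eq_range_gen hm S (Nat.card S) hq rfl, eq_range_gen hm C (Nat.card S) hq hcardC]

section proj

variable (m n k i j : ℕ) (him : i ∣ m) (hjn : j ∣ n)
  (hdi : i * j / k ∣ i) (hdj : i * j / k ∣ j)

lemma map_fst_Hsub (u : ZMod (i * j / k)) :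
    (Hsub m n k i j him hjn hdi hdj u).map (AddMonoidHom.fst _ _) = (gen m i him).range := by
  ext x
  simp only [AddSubgroup.mem_map, AddMonoidHom.mem_range]
  constructor
  · rintro ⟨⟨x', y⟩, hmem, rfl⟩
    obtain ⟨s, t, rfl, rfl, hrel⟩ := (mem_Hsub m n k i j him hjn hdi hdj u x' y).1 hmem
    exact ⟨s, rfl⟩
  · rintro ⟨s, rfl⟩
    obtain ⟨t, ht⟩ := ZMod.ringHom_surjective (ZMod.castHom hdj (ZMod (i * j / k)))
      (u * ZMod.castHom hdi (ZMod (i * j / k)) s)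
    exact ⟨(gen m i him s, gen n j hjn t),
      (mem_Hsub m n k i j him hjn hdi hdj u _ _).2 ⟨s, t, rfl, rfl, ht⟩, rfl⟩

lemma map_snd_Hsub (u : (ZMod (i * j / k))ˣ) :
    (Hsub m n k i j him hjn hdi hdj (u : ZMod (i * j / k))).map (AddMonoidHom.snd _ _)
      = (gen n j hjn).range := by
  ext y
  simp only [AddSubgroup.mem_map, AddMonoidHom.mem_range]
  constructor
  · rintro ⟨⟨x, y'⟩, hmem, rfl⟩
    obtain ⟨s, t, rfl, rfl, hrel⟩ := (mem_Hsub m n k i j him hjn hdi hdj _ x y').1 hmem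
    exact ⟨t, rfl⟩
  · rintro ⟨t, rfl⟩
    obtain ⟨s, hs⟩ := ZMod.ringHom_surjective (ZMod.castHom hdi (ZMod (i * j / k)))
      ((u⁻¹ : (ZMod (i * j / k))ˣ) * ZMod.castHom hdj (ZMod (i * j / k)) t)
    refine ⟨(gen m i him s, gen n j hjn t),
      (mem_Hsub m n k i j him hjn hdi hdj _ _ _).2 ⟨s, t, rfl, rfl, ?_⟩, rfl⟩
    rw [hs, ← mul_assoc, Units.mul_inv, one_mul]

lemma Hsub_inj (hm : m ≠ 0) (hn : n ≠ 0) (u u' : ZMod (i * j / k))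
    (h : Hsub m n k i j him hjn hdi hdj u = Hsub m n k i j him hjn hdi hdj u') : u = u' := by
  obtain ⟨t, ht⟩ := ZMod.ringHom_surjective (ZMod.castHom hdj (ZMod (i * j / k)))
    (u * ZMod.castHom hdi (ZMod (i * j / k)) 1)
  have hmem : (gen m i him 1, gen n j hjn t) ∈ Hsub m n k i j him hjn hdi hdj u :=
    (mem_Hsub m n k i j him hjn hdi hdj u _ _).2 ⟨1, t, rfl, rfl, ht⟩
  rw [h] at hmem
  obtain ⟨s', t', hs', ht', hrel⟩ := (mem_Hsub m n k i j him hjn hdi hdj u' _ _).1 hmem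
  have hs1 : s' = 1 := gen_injective hm i him hs'.symm
  have ht1 : t' = t := gen_injective hn j hjn ht'.symm
  rw [hs1, ht1, ht, map_one, mul_one, mul_one] at hrel
  exact hrel

end proj

lemma card_eq_range_mul_ker {A B : Type*} [AddGroup A] [AddGroup B] (f : A →+ B) :
    Nat.card A = Nat.card f.range * Nat.card f.ker := by
  rw [AddSubgroup.card_eq_card_quotient_mul_card_addSubgroup f.ker]
  congr 1
  exact Nat.card_congr (QuotientAddGroup.quotientKerEquivRange _).toEquiv

section surj

variable {m n k : ℕ}

lemma eq_Hsub (hm : m ≠ 0) (hn : n ≠ 0) (hk0 : k ≠ 0)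
    (H : AddSubgroup (ZMod m × ZMod n)) (hH : Nat.card H = k) (i j : ℕ)
    (hi : Nat.card (H.map (AddMonoidHom.fst (ZMod m) (ZMod n))) = i)
    (hj : Nat.card (H.map (AddMonoidHom.snd (ZMod m) (ZMod n))) = j) :
    ∃ (him : i ∣ m) (hik : i ∣ k) (hjn : j ∣ n) (hjk : j ∣ k) (hkij : k ∣ i * j)
      (u : (ZMod (i * j / k))ˣ),
      H = Hsub m n k i j him hjn (aux_div_dvd hk0 hjk hkij) (aux_div_dvd' hk0 hik hkij)
        (u : ZMod (i * j / k)) := by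
  haveI : NeZero m := ⟨hm⟩
  haveI : NeZero n := ⟨hn⟩
  set π₁ : H →+ ZMod m := (AddMonoidHom.fst (ZMod m) (ZMod n)).comp H.subtype with hπ₁
  set π₂ : H →+ ZMod n := (AddMonoidHom.snd (ZMod m) (ZMod n)).comp H.subtype with hπ₂
  have hr1 : π₁.range = H.map (AddMonoidHom.fst (ZMod m) (ZMod n)) := by
    rw [hπ₁, AddMonoidHom.range_comp, AddSubgroup.range_subtype]
  have hr2 : π₂.range = H.map (AddMonoidHom.snd (ZMod m) (ZMod n)) := by
    rw [hπ₂, AddMonoidHom.range_comp, AddSubgroup.range_subtype]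
  set K₁ : AddSubgroup (ZMod m) := H.comap (AddMonoidHom.inl (ZMod m) (ZMod n)) with hK₁
  set K₂ : AddSubgroup (ZMod n) := H.comap (AddMonoidHom.inr (ZMod m) (ZMod n)) with hK₂
  have hK₁mem : ∀ x : ZMod m, x ∈ K₁ ↔ (x, 0) ∈ H := fun x => Iff.rfl
  have hK₂mem : ∀ y : ZMod n, y ∈ K₂ ↔ ((0 : ZMod m), y) ∈ H := fun y => Iff.rfl
  -- ker π₂ ≃ K₁
  have e₂ : π₂.ker ≃ K₁ := by
    refine ⟨fun z => ⟨(z.1.1 : ZMod m × ZMod n).1, ?_⟩,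
      fun x => ⟨⟨(x.1, 0), x.2⟩, ?_⟩, fun z => ?_, fun x => rfl⟩
    · have h0 : (z.1.1 : ZMod m × ZMod n).2 = 0 := z.2
      have := z.1.2
      rw [hK₁mem]
      convert this
      exact h0.symm
    · show (0 : ZMod n) = 0
      rfl
    · apply Subtype.ext; apply Subtype.ext
      have h0 : (z.1.1 : ZMod m × ZMod n).2 = 0 := z.2
      exact Prod.ext rfl h0.symm
  have e₁ : π₁.ker ≃ K₂ := by
    refine ⟨fun z => ⟨(z.1.1 : ZMod m × ZMod n).2, ?_⟩,
      fun y => ⟨⟨(0, y.1), y.2⟩, ?_⟩, fun z => ?_, fun y => rfl⟩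
    · have h0 : (z.1.1 : ZMod m × ZMod n).1 = 0 := z.2
      have := z.1.2
      rw [hK₂mem]
      convert this
      exact h0.symm
    · show (0 : ZMod m) = 0
      rfl
    · apply Subtype.ext; apply Subtype.ext
      have h0 : (z.1.1 : ZMod m × ZMod n).1 = 0 := z.2
      exact Prod.ext h0.symm rfl
  have hc2 : k = j * Nat.card K₁ := by
    rw [← hH, card_eq_range_mul_ker π₂, hr2, hj, Nat.card_congr e₂]
  have hc1 : k = i * Nat.card K₂ := by
    rw [← hH, card_eq_range_mul_ker π₁, hr1, hi, Nat.card_congr e₁]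
  have hik : i ∣ k := ⟨Nat.card K₂, hc1⟩
  have hjk : j ∣ k := ⟨Nat.card K₁, hc2⟩
  have hi0 : i ≠ 0 := fun h0 => hk0 (by rw [hc1, h0, zero_mul])
  have hj0 : j ≠ 0 := fun h0 => hk0 (by rw [hc2, h0, zero_mul])
  have him : i ∣ m := by
    have h := AddSubgroup.card_addSubgroup_dvd_card (H.map (AddMonoidHom.fst (ZMod m) (ZMod n)))
    rw [Nat.card_zmod, hi] at h
    exact h
  have hjn : j ∣ n := by
    have h := AddSubgroup.card_addSubgroup_dvd_card (H.map (AddMonoidHom.snd (ZMod m) (ZMod n)))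
    rw [Nat.card_zmod, hj] at h
    exact h
  have hK₁le : K₁ ≤ H.map (AddMonoidHom.fst (ZMod m) (ZMod n)) := by
    intro x hx
    exact ⟨(x, 0), (hK₁mem x).1 hx, rfl⟩
  have hK₂le : K₂ ≤ H.map (AddMonoidHom.snd (ZMod m) (ZMod n)) := by
    intro y hy
    exact ⟨(0, y), (hK₂mem y).1 hy, rfl⟩
  have hkij : k ∣ i * j := by
    have h1 : Nat.card K₁ ∣ i := by
      rw [← hi]; exact AddSubgroup.card_dvd_of_le hK₁le
    obtain ⟨c, hc⟩ := h1
    exact ⟨c, by rw [hc2, hc]; ring⟩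
  refine ⟨him, hik, hjn, hjk, hkij, ?_⟩
  set d := i * j / k with hd
  have hdi := aux_div_dvd hk0 hjk hkij
  have hdj := aux_div_dvd' hk0 hik hkij
  have hkd : k * d = i * j := Nat.mul_div_cancel' hkij
  have hd0 : d ≠ 0 := by
    intro h0
    rw [h0, mul_zero] at hkd
    exact hi0 (by rcases Nat.mul_eq_zero.1 hkd.symm with h | h; exact h; exact absurd h hj0)
  -- K₁ and K₂ as images of kernels of cast
  have hK₁card : Nat.card K₁ * d = i := by
    refine Nat.eq_of_mul_eq_mul_left (Nat.pos_of_ne_zero hj0) ?_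
    calc j * (Nat.card K₁ * d) = (j * Nat.card K₁) * d := by ring
    _ = k * d := by rw [← hc2]
    _ = i * j := hkd
    _ = j * i := by ring
  have hK₂card : Nat.card K₂ * d = j := by
    refine Nat.eq_of_mul_eq_mul_left (Nat.pos_of_ne_zero hi0) ?_
    calc i * (Nat.card K₂ * d) = (i * Nat.card K₂) * d := by ring
    _ = k * d := by rw [← hc1]
    _ = i * j := hkd
  have hK₁eq : K₁ = ((ZMod.castHom hdi (ZMod d)).toAddMonoidHom.ker).map (gen m i him) :=
    eq_map_ker_cast hm him hdi K₁ hK₁card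
  have hK₂eq : K₂ = ((ZMod.castHom hdj (ZMod d)).toAddMonoidHom.ker).map (gen n j hjn) :=
    eq_map_ker_cast hn hjn hdj K₂ hK₂card
  have hmapfst : H.map (AddMonoidHom.fst (ZMod m) (ZMod n)) = (gen m i him).range :=
    eq_range_gen hm _ i him hi
  have hmapsnd : H.map (AddMonoidHom.snd (ZMod m) (ZMod n)) = (gen n j hjn).range :=
    eq_range_gen hn _ j hjn hj
  -- choose t₀
  have hgen1 : gen m i him 1 ∈ H.map (AddMonoidHom.fst (ZMod m) (ZMod n)) := by
    rw [hmapfst]; exact ⟨1, rfl⟩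
  obtain ⟨⟨x₀, y₀⟩, hz₀, hx₀⟩ := hgen1
  have hy₀ : y₀ ∈ (gen n j hjn).range := by
    rw [← hmapsnd]; exact ⟨(x₀, y₀), hz₀, rfl⟩
  obtain ⟨t₀, ht₀⟩ := hy₀
  set u₀ : ZMod d := ZMod.castHom hdj (ZMod d) t₀ with hu₀
  have hmem₀ : (gen m i him 1, gen n j hjn t₀) ∈ H := by
    have heq : (x₀, y₀) = (gen m i him 1, gen n j hjn t₀) := by
      rw [Prod.mk.injEq]; exact ⟨hx₀, ht₀.symm⟩
    rwa [heq] at hz₀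
  -- symmetric choice
  have hgen1' : gen n j hjn 1 ∈ H.map (AddMonoidHom.snd (ZMod m) (ZMod n)) := by
    rw [hmapsnd]; exact ⟨1, rfl⟩
  obtain ⟨⟨x₁, y₁⟩, hz₁, hy₁⟩ := hgen1'
  have hx₁ : x₁ ∈ (gen m i him).range := by
    rw [← hmapfst]; exact ⟨(x₁, y₁), hz₁, rfl⟩
  obtain ⟨s₁, hs₁⟩ := hx₁
  set v₀ : ZMod d := ZMod.castHom hdi (ZMod d) s₁ with hv₀
  have hmem₁ : (gen m i him s₁, gen n j hjn 1) ∈ H := by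
    have heq : (x₁, y₁) = (gen m i him s₁, gen n j hjn 1) := by
      rw [Prod.mk.injEq]; exact ⟨hs₁.symm, hy₁⟩
    rwa [heq] at hz₁
  -- the key relations
  have key : ∀ (s : ZMod i) (t : ZMod j), (gen m i him s, gen n j hjn t) ∈ H →
      ZMod.castHom hdj (ZMod d) t = ZMod.castHom hdi (ZMod d) s * u₀ := by
    intro s t hst
    obtain ⟨σ, rfl⟩ := ZMod.intCast_surjective s
    have h1 : σ • ((gen m i him 1, gen n j hjn t₀) : ZMod m × ZMod n) ∈ H :=
      zsmul_mem hmem₀ σ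
    have hgs : gen m i him ((σ : ℤ) : ZMod i) = σ • gen m i him 1 := by
      rw [show ((σ : ℤ) : ZMod i) = σ • (1 : ZMod i) by rw [zsmul_eq_mul, mul_one], map_zsmul]
    have h2 : ((0 : ZMod m), gen n j hjn (t - σ • t₀)) ∈ H := by
      have h3 := H.sub_mem hst h1
      have e : ((gen m i him ((σ : ℤ) : ZMod i), gen n j hjn t)
          - σ • (gen m i him 1, gen n j hjn t₀) : ZMod m × ZMod n)
          = ((0 : ZMod m), gen n j hjn (t - σ • t₀)) := by
        rw [Prod.smul_mk, Prod.mk_sub_mk, hgs, sub_self, map_sub, map_zsmul]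
      rwa [e] at h3
    have h4 : gen n j hjn (t - σ • t₀) ∈ K₂ := (hK₂mem _).2 h2
    rw [hK₂eq] at h4
    obtain ⟨w, hw, hww⟩ := h4
    have hw' : t - σ • t₀ ∈ (ZMod.castHom hdj (ZMod d)).toAddMonoidHom.ker := by
      rwa [gen_injective hn j hjn hww] at hw
    have h5 : ZMod.castHom hdj (ZMod d) t - ZMod.castHom hdj (ZMod d) (σ • t₀) = 0 := by
      rw [← map_sub]; exact hw'
    rw [sub_eq_zero] at h5
    rw [h5, map_zsmul, map_intCast, ← hu₀, zsmul_eq_mul]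
  have key2 : ∀ (s : ZMod i) (t : ZMod j), (gen m i him s, gen n j hjn t) ∈ H →
      ZMod.castHom hdi (ZMod d) s = ZMod.castHom hdj (ZMod d) t * v₀ := by
    intro s t hst
    obtain ⟨σ, rfl⟩ := ZMod.intCast_surjective t
    have h1 : σ • ((gen m i him s₁, gen n j hjn 1) : ZMod m × ZMod n) ∈ H :=
      zsmul_mem hmem₁ σ
    have hgs : gen n j hjn ((σ : ℤ) : ZMod j) = σ • gen n j hjn 1 := by
      rw [show ((σ : ℤ) : ZMod j) = σ • (1 : ZMod j) by rw [zsmul_eq_mul, mul_one], map_zsmul]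
    have h2 : (gen m i him (s - σ • s₁), (0 : ZMod n)) ∈ H := by
      have h3 := H.sub_mem hst h1
      have e : ((gen m i him s, gen n j hjn ((σ : ℤ) : ZMod j))
          - σ • (gen m i him s₁, gen n j hjn 1) : ZMod m × ZMod n)
          = (gen m i him (s - σ • s₁), (0 : ZMod n)) := by
        rw [Prod.smul_mk, Prod.mk_sub_mk, hgs, sub_self, map_sub, map_zsmul]
      rwa [e] at h3
    have h4 : gen m i him (s - σ • s₁) ∈ K₁ := (hK₁mem _).2 h2
    rw [hK₁eq] at h4
    obtain ⟨w, hw, hww⟩ := h4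
    have hw' : s - σ • s₁ ∈ (ZMod.castHom hdi (ZMod d)).toAddMonoidHom.ker := by
      rwa [gen_injective hm i him hww] at hw
    have h5 : ZMod.castHom hdi (ZMod d) s - ZMod.castHom hdi (ZMod d) (σ • s₁) = 0 := by
      rw [← map_sub]; exact hw'
    rw [sub_eq_zero] at h5
    rw [h5, map_zsmul, map_intCast, ← hv₀, zsmul_eq_mul]
  -- u₀ is a unit
  have hunit : u₀ * v₀ = 1 := by
    have ha := key s₁ 1 hmem₁
    have hb : (1 : ZMod d) = ZMod.castHom hdi (ZMod d) s₁ * u₀ := by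
      rw [← map_one (ZMod.castHom hdj (ZMod d))]; exact ha
    rw [← hv₀] at hb
    rw [mul_comm]
    exact hb.symm
  set U : (ZMod d)ˣ := Units.mkOfMulEqOne u₀ v₀ hunit with hU
  refine ⟨U, ?_⟩
  have hle : H ≤ Hsub m n k i j him hjn hdi hdj (U : ZMod d) := by
    rintro ⟨x, y⟩ hxy
    have hx : x ∈ (gen m i him).range := by
      rw [← hmapfst]; exact ⟨(x, y), hxy, rfl⟩
    have hy : y ∈ (gen n j hjn).range := by
      rw [← hmapsnd]; exact ⟨(x, y), hxy, rfl⟩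
    obtain ⟨s, rfl⟩ := hx
    obtain ⟨t, rfl⟩ := hy
    refine (mem_Hsub m n k i j him hjn hdi hdj _ _ _).2 ⟨s, t, rfl, rfl, ?_⟩
    rw [key s t hxy]
    show ZMod.castHom hdi (ZMod d) s * u₀ = u₀ * ZMod.castHom hdi (ZMod d) s
    ring
  have hcard : Nat.card (Hsub m n k i j him hjn hdi hdj (U : ZMod d)) = Nat.card H := by
    rw [hH]
    exact card_Hsub m n k i j him hjn hdi hdj hm hn hk0 hkij _
  exact AddSubgroup.eq_of_le_of_card_ge hle (le_of_eq hcard)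

end surj



section count

variable {m n k : ℕ}

lemma card_fiber (hm : m ≠ 0) (hn : n ≠ 0) (hk0 : k ≠ 0) (i j : ℕ)
    (him : i ∣ m) (hik : i ∣ k) (hjn : j ∣ n) (hjk : j ∣ k) (hkij : k ∣ i * j) :
    Nat.card {a : {H : AddSubgroup (ZMod m × ZMod n) // Nat.card H = k} //
        (Nat.card (a.1.map (AddMonoidHom.fst (ZMod m) (ZMod n))),
         Nat.card (a.1.map (AddMonoidHom.snd (ZMod m) (ZMod n)))) = (i, j)} =
      Nat.totient (i * j / k) := by
  haveI : NeZero m := ⟨hm⟩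
  haveI : NeZero n := ⟨hn⟩
  have hi0 : i ≠ 0 := fun h0 => hm (by simpa [h0] using him)
  have hj0 : j ≠ 0 := fun h0 => hn (by simpa [h0] using hjn)
  have hij0 : i * j ≠ 0 := by positivity
  have hd0 : i * j / k ≠ 0 :=
    Nat.div_ne_zero_iff.2 ⟨hk0, Nat.le_of_dvd (Nat.pos_of_ne_zero hij0) hkij⟩
  haveI : NeZero (i * j / k) := ⟨hd0⟩
  set hdi := aux_div_dvd hk0 hjk hkij
  set hdj := aux_div_dvd' hk0 hik hkij
  set Φ : (ZMod (i * j / k))ˣ → {a : {H : AddSubgroup (ZMod m × ZMod n) // Nat.card H = k} //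
        (Nat.card (a.1.map (AddMonoidHom.fst (ZMod m) (ZMod n))),
         Nat.card (a.1.map (AddMonoidHom.snd (ZMod m) (ZMod n)))) = (i, j)} :=
    fun u => ⟨⟨Hsub m n k i j him hjn hdi hdj (u : ZMod (i * j / k)),
      card_Hsub m n k i j him hjn hdi hdj hm hn hk0 hkij _⟩, by
        rw [Prod.mk.injEq]
        constructor
        · rw [map_fst_Hsub m n k i j him hjn hdi hdj, card_range_gen hm i him]
        · rw [map_snd_Hsub m n k i j him hjn hdi hdj, card_range_gen hn j hjn]⟩ with hΦ
  have hbij : Function.Bijective Φ := by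
    constructor
    · intro u u' huu
      have h1 : Hsub m n k i j him hjn hdi hdj (u : ZMod (i * j / k))
          = Hsub m n k i j him hjn hdi hdj (u' : ZMod (i * j / k)) :=
        congrArg (fun a => a.1.1) huu
      exact Units.ext (Hsub_inj m n k i j him hjn hdi hdj hm hn _ _ h1)
    · rintro ⟨⟨H, hHcard⟩, hfa⟩
      rw [Prod.mk.injEq] at hfa
      obtain ⟨him', hik', hjn', hjk', hkij', u, hEq⟩ :=
        eq_Hsub hm hn hk0 H hHcard i j hfa.1 hfa.2
      exact ⟨u, by apply Subtype.ext; apply Subtype.ext; exact hEq.symm⟩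
  rw [← Nat.card_congr (Equiv.ofBijective Φ hbij), Nat.card_eq_fintype_card,
    ZMod.card_units_eq_totient]

end count

theorem main_count (m n k : ℕ) (hm : 0 < m) (hn : 0 < n) (hk : k ∣ m * n) :
    Nat.card {H : AddSubgroup (ZMod m × ZMod n) // Nat.card H = k} =
      ∑ i ∈ (Nat.gcd m k).divisors, ∑ j ∈ (Nat.gcd n k).divisors,
        if k ∣ i * j then Nat.totient (i * j / k) else 0 := by
  classical
  have hm0 : m ≠ 0 := hm.ne'
  have hn0 : n ≠ 0 := hn.ne'
  have hk0 : k ≠ 0 := by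
    rintro rfl
    have : m * n = 0 := Nat.eq_zero_of_zero_dvd hk
    rcases Nat.mul_eq_zero.1 this with h | h
    exacts [hm0 h, hn0 h]
  haveI : NeZero m := ⟨hm0⟩
  haveI : NeZero n := ⟨hn0⟩
  set α := {H : AddSubgroup (ZMod m × ZMod n) // Nat.card H = k} with hα
  set f : α → ℕ × ℕ := fun a =>
    (Nat.card (a.1.map (AddMonoidHom.fst (ZMod m) (ZMod n))),
     Nat.card (a.1.map (AddMonoidHom.snd (ZMod m) (ZMod n)))) with hf
  set P : Finset (ℕ × ℕ) :=
    ((Nat.gcd m k).divisors ×ˢ (Nat.gcd n k).divisors).filter (fun p => k ∣ p.1 * p.2) with hP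
  haveI : Finite (AddSubgroup (ZMod m × ZMod n)) :=
    Finite.of_injective _ SetLike.coe_injective
  haveI : Fintype α := Fintype.ofFinite α
  have hmemP : ∀ a : α, f a ∈ P := by
    intro a
    obtain ⟨him, hik, hjn, hjk, hkij, u, _⟩ :=
      eq_Hsub hm0 hn0 hk0 a.1 a.2 _ _ rfl rfl
    rw [hP, Finset.mem_filter, Finset.mem_product]
    refine ⟨⟨?_, ?_⟩, hkij⟩
    · exact Nat.mem_divisors.2 ⟨Nat.dvd_gcd him hik, Nat.gcd_ne_zero_left hm0⟩
    · exact Nat.mem_divisors.2 ⟨Nat.dvd_gcd hjn hjk, Nat.gcd_ne_zero_left hn0⟩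
  have hstep : Nat.card α = ∑ p ∈ P, Nat.totient (p.1 * p.2 / k) := by
    rw [Nat.card_eq_fintype_card, ← Finset.card_univ,
      Finset.card_eq_sum_card_fiberwise (fun a _ => hmemP a)]
    refine Finset.sum_congr rfl ?_
    intro p hp
    rw [hP, Finset.mem_filter, Finset.mem_product] at hp
    obtain ⟨⟨hpi, hpj⟩, hpk⟩ := hp
    rw [Nat.mem_divisors] at hpi hpj
    have him : p.1 ∣ m := hpi.1.trans (Nat.gcd_dvd_left m k)
    have hik : p.1 ∣ k := hpi.1.trans (Nat.gcd_dvd_right m k)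
    have hjn : p.2 ∣ n := hpj.1.trans (Nat.gcd_dvd_left n k)
    have hjk : p.2 ∣ k := hpj.1.trans (Nat.gcd_dvd_right n k)
    have := card_fiber hm0 hn0 hk0 p.1 p.2 him hik hjn hjk hpk
    rw [← this, Nat.card_eq_fintype_card, Fintype.card_subtype]
  rw [hstep, hP, Finset.sum_filter, Finset.sum_product]

end NOSK

/-- The number of subgroups of order `k` of `Z_m × Z_n` equals
`∑ φ(ij/k)` over `i ∣ gcd(m,k)`, `j ∣ gcd(n,k)` with `k ∣ ij`. -/
theorem number_of_subgroups_order_k_rank_two (m n k : ℕ) (hm : 0 < m) (hn : 0 < n)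
    (hk : k ∣ m * n) :
    Nat.card {H : AddSubgroup (ZMod m × ZMod n) // Nat.card H = k} =
      ∑ i ∈ (Nat.gcd m k).divisors, ∑ j ∈ (Nat.gcd n k).divisors,
        if k ∣ i * j then Nat.totient (i * j / k) else 0 :=
  NOSK.main_count m n k hm hn hk
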